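/- With agents sorted v_1 ≥ ... ≥ v_n > 0 and k = max{l : Σ_{i=1}^l B_i ≤ v_l·Σ_{i=l+1}^n Γ_i}, if Σ_{i=1}^k B_i > v_{k+1}·Σ_{i=k+1}^n Γ_i, then the mechanism's welfare satisfies MLW(x) = Σ_{i=1}^k (B_i + v_i·Γ_i) > v_{k+1}·Σ_{i=k+1}^n Γ_i. -/

import Mathlib

open Finset

/-- Case `∑_{i=1}^k B_i > v_{k+1}·∑_{i=k+1}^n Γ_i` of the Differential Pricing
Mechanism (so `q = ∑_{i≤k} B_i / ∑_{i≥k+1} Γ_i`): the mechanism's welfare equals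
`∑_{i=1}^k (B_i + v_iΓ_i)` and strictly exceeds `v_{k+1}·∑_{i=k+1}^n Γ_i`. -/
theorem stmt_14 (n k : ℕ) (v B Γ : ℕ → ℝ)
    (hv : ∀ i ∈ Icc 1 n, 0 < v i)
    (hsort : ∀ i ∈ Icc 1 n, ∀ j ∈ Icc 1 n, i ≤ j → v j ≤ v i)
    (hB : ∀ i ∈ Icc 1 n, 0 ≤ B i) (hΓ : ∀ i ∈ Icc 1 n, 0 ≤ Γ i)
    (hk1 : 1 ≤ k) (hkn : k + 1 ≤ n)
    (hkle : ∑ i ∈ Icc 1 k, B i ≤ v k * ∑ i ∈ Icc (k+1) n, Γ i)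
    (hkmax : ∀ l, 1 ≤ l → l ≤ n →
      (∑ i ∈ Icc 1 l, B i ≤ v l * ∑ i ∈ Icc (l+1) n, Γ i) → l ≤ k)
    (hcase : v (k+1) * ∑ i ∈ Icc (k+1) n, Γ i < ∑ i ∈ Icc 1 k, B i)
    (q : ℝ) (hq : q = (∑ i ∈ Icc 1 k, B i) / ∑ i ∈ Icc (k+1) n, Γ i)
    (x : ℕ → ℝ)
    (hx1 : ∀ i, 1 ≤ i → i ≤ k → x i = B i / q)
    (hx2 : x (k+1) = ∑ i ∈ Icc (k+2) n, Γ i - ∑ i ∈ Icc 1 k, B i / q)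
    (hx3 : ∀ i, k+2 ≤ i → i ≤ n → x i = -Γ i) :
    ∑ i ∈ Icc 1 n, (v i * Γ i + min (v i * x i) (B i))
      = ∑ i ∈ Icc 1 k, (B i + v i * Γ i) ∧
    v (k+1) * ∑ i ∈ Icc (k+1) n, Γ i < ∑ i ∈ Icc 1 k, (B i + v i * Γ i) := by
  have hk1n : k + 1 ∈ Icc 1 n := by simp; omega
  have hvk1 : 0 < v (k+1) := hv _ hk1n
  have hSGnn : 0 ≤ ∑ i ∈ Icc (k+1) n, Γ i :=
    Finset.sum_nonneg fun i hi => hΓ i (by simp at hi ⊢; omega)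
  have hSBpos : 0 < ∑ i ∈ Icc 1 k, B i :=
    lt_of_le_of_lt (by positivity) hcase
  have hSGpos : 0 < ∑ i ∈ Icc (k+1) n, Γ i := by
    rcases lt_or_eq_of_le hSGnn with h | h
    · exact h
    · exfalso; rw [← h] at hkle; simp at hkle; linarith
  have hqpos : 0 < q := by rw [hq]; positivity
  have hdiv : (∑ i ∈ Icc 1 k, B i) / q = ∑ i ∈ Icc (k+1) n, Γ i := by
    rw [hq]; field_simp
  have hqle : q ≤ v k := by
    rw [hq, div_le_iff₀ hSGpos]; exact hkle
  have hsplitG : Icc (k+1) n = insert (k+1) (Icc (k+2) n) := by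
    ext i; simp; omega
  have hxk1 : x (k+1) = -Γ (k+1) := by
    rw [hx2, ← Finset.sum_div, hdiv, hsplitG, Finset.sum_insert (by simp)]
    ring
  have hterm1 : ∀ i ∈ Icc 1 k, v i * Γ i + min (v i * x i) (B i) = B i + v i * Γ i := by
    intro i hi
    simp only [mem_Icc] at hi
    rw [hx1 i hi.1 hi.2]
    have hin : i ∈ Icc 1 n := by simp; omega
    have hvi : q ≤ v i := le_trans hqle (hsort i hin k (by simp; omega) hi.2)
    have hBi := hB i hin
    have : min (v i * (B i / q)) (B i) = B i := by
      apply min_eq_right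
      calc B i = q * (B i / q) := by field_simp
        _ ≤ v i * (B i / q) := mul_le_mul_of_nonneg_right hvi (by positivity)
    rw [this]; ring
  have hterm0 : ∀ i ∈ Icc (k+1) n, v i * Γ i + min (v i * x i) (B i) = 0 := by
    intro i hi
    simp only [mem_Icc] at hi
    have hin : i ∈ Icc 1 n := by simp; omega
    have hxi : x i = -Γ i := by
      rcases eq_or_lt_of_le hi.1 with h | h
      · rw [← h]; exact hxk1
      · exact hx3 i h hi.2
    rw [hxi]
    have hvi := hv i hin
    have hΓi := hΓ i hin
    have : min (v i * -Γ i) (B i) = v i * -Γ i := by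
      apply min_eq_left
      have : v i * -Γ i ≤ 0 := by nlinarith
      linarith [hB i hin]
    rw [this]; ring
  have hsplit : Icc 1 n = Icc 1 k ∪ Icc (k+1) n := by
    ext i; simp; omega
  have hdisj : Disjoint (Icc 1 k) (Icc (k+1) n) := by
    simp [Finset.disjoint_left]; intro i h1 h2; omega
  have hmain : ∑ i ∈ Icc 1 n, (v i * Γ i + min (v i * x i) (B i))
      = ∑ i ∈ Icc 1 k, (B i + v i * Γ i) := by
    rw [hsplit, Finset.sum_union hdisj, Finset.sum_congr rfl hterm1,
      Finset.sum_eq_zero hterm0, add_zero]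
  refine ⟨hmain, ?_⟩
  have hpos : 0 ≤ ∑ i ∈ Icc 1 k, v i * Γ i := by
    apply Finset.sum_nonneg
    intro i hi; simp only [mem_Icc] at hi
    have hin : i ∈ Icc 1 n := by simp; omega
    exact mul_nonneg (le_of_lt (hv i hin)) (hΓ i hin)
  have : ∑ i ∈ Icc 1 k, (B i + v i * Γ i)
      = (∑ i ∈ Icc 1 k, B i) + ∑ i ∈ Icc 1 k, v i * Γ i := by
    rw [Finset.sum_add_distrib]
  linarith
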